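/- There exist μ ≥ −k₀⁴, ζ ∈ (0,1), and a continuous positive function y : [0,1] → ℝ which is C¹ on [0,ζ] and on [ζ,1] (with possibly different one-sided derivatives at ζ), twice differentiable with −y'' = μ y on (0,ζ) ∪ (ζ,1), and satisfying y'(0) − k₀² y(0) = 0, 2 y'(ζ−0) − y(ζ) = 0, 2 y'(ζ+0) + y(ζ) = 0, y'(1) + k₁² y(1) = 0, if and only if k₀² > 1/2 or k₀² = k₁² = 1/2. -/

import Mathlib

open MeasureTheory Set Real Filter

open Topology

set_option maxHeartbeats 1600000

/-- Existence of a continuous positive solution of `-y'' = μ y` on `(0,ζ) ∪ (ζ,1)` that is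
`C¹` on `[0,ζ]` and on `[ζ,1]` (with possibly different one-sided derivatives `dL ζ`, `dR ζ`
at `ζ`), satisfying `y'(0) - k₀² y(0) = 0`, `2 y'(ζ-0) - y(ζ) = 0`, `2 y'(ζ+0) + y(ζ) = 0`
and `y'(1) + k₁² y(1) = 0`. -/
def BrokenSol (k0 k1 μ ζ : ℝ) : Prop :=
  ∃ y dL dR : ℝ → ℝ,
    ContinuousOn y (Icc (0:ℝ) 1) ∧
    (∀ x ∈ Icc (0:ℝ) 1, 0 < y x) ∧
    (∀ x ∈ Icc (0:ℝ) ζ, HasDerivWithinAt y (dL x) (Icc (0:ℝ) ζ) x) ∧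
    (∀ x ∈ Icc ζ (1:ℝ), HasDerivWithinAt y (dR x) (Icc ζ (1:ℝ)) x) ∧
    ContinuousOn dL (Icc (0:ℝ) ζ) ∧
    ContinuousOn dR (Icc ζ (1:ℝ)) ∧
    (∀ x ∈ Ioo (0:ℝ) ζ, HasDerivWithinAt dL (-(μ * y x)) (Icc (0:ℝ) ζ) x) ∧
    (∀ x ∈ Ioo ζ (1:ℝ), HasDerivWithinAt dR (-(μ * y x)) (Icc ζ (1:ℝ)) x) ∧
    dL 0 - k0 ^ 2 * y 0 = 0 ∧
    2 * dL ζ - y ζ = 0 ∧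
    2 * dR ζ + y ζ = 0 ∧
    dR 1 + k1 ^ 2 * y 1 = 0

lemma glue {k0 k1 μ ζ : ℝ} (h0 : 0 < ζ) (h1 : ζ < 1)
    (yL yR dLf dRf : ℝ → ℝ)
    (hyL : ∀ x ∈ Icc (0:ℝ) ζ, HasDerivWithinAt yL (dLf x) (Icc (0:ℝ) ζ) x)
    (hyR : ∀ x ∈ Icc ζ (1:ℝ), HasDerivWithinAt yR (dRf x) (Icc ζ (1:ℝ)) x)
    (hposL : ∀ x ∈ Icc (0:ℝ) ζ, 0 < yL x)
    (hposR : ∀ x ∈ Icc ζ (1:ℝ), 0 < yR x)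
    (hdLc : ContinuousOn dLf (Icc (0:ℝ) ζ))
    (hdRc : ContinuousOn dRf (Icc ζ (1:ℝ)))
    (hdL2 : ∀ x ∈ Ioo (0:ℝ) ζ, HasDerivWithinAt dLf (-(μ * yL x)) (Icc (0:ℝ) ζ) x)
    (hdR2 : ∀ x ∈ Ioo ζ (1:ℝ), HasDerivWithinAt dRf (-(μ * yR x)) (Icc ζ (1:ℝ)) x)
    (hmatch : yL ζ = yR ζ)
    (bc1 : dLf 0 - k0 ^ 2 * yL 0 = 0)
    (bc2 : 2 * dLf ζ - yL ζ = 0)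
    (bc3 : 2 * dRf ζ + yR ζ = 0)
    (bc4 : dRf 1 + k1 ^ 2 * yR 1 = 0) :
    BrokenSol k0 k1 μ ζ := by
  have h0' : (0:ℝ) ≤ ζ := h0.le
  have h1' : ζ ≤ 1 := h1.le
  set y : ℝ → ℝ := fun x => if x ≤ ζ then yL x else yR x with hy_def
  have eqL : ∀ x ∈ Icc (0:ℝ) ζ, y x = yL x := fun x hx => if_pos hx.2
  have eqR : ∀ x ∈ Icc ζ (1:ℝ), y x = yR x := by
    intro x hx
    by_cases h : x ≤ ζ
    · have hxζ : x = ζ := le_antisymm h hx.1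
      simp only [hy_def, hxζ, if_pos le_rfl, hmatch]
    · exact if_neg h
  have cL0 : ContinuousOn yL (Icc (0:ℝ) ζ) := fun x hx => (hyL x hx).continuousWithinAt
  have cR0 : ContinuousOn yR (Icc ζ (1:ℝ)) := fun x hx => (hyR x hx).continuousWithinAt
  have cL : ContinuousOn y (Icc (0:ℝ) ζ) := cL0.congr eqL
  have cR : ContinuousOn y (Icc ζ (1:ℝ)) := cR0.congr eqR
  have hunion : Icc (0:ℝ) ζ ∪ Icc ζ 1 = Icc (0:ℝ) 1 := Icc_union_Icc_eq_Icc h0' h1'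
  have cy : ContinuousOn y (Icc (0:ℝ) 1) := by
    rw [← hunion]
    intro x hx
    have l : ContinuousWithinAt y (Icc (0:ℝ) ζ) x := by
      by_cases h : x ∈ Icc (0:ℝ) ζ
      · exact cL x h
      · exact continuousWithinAt_of_notMem_closure (by rwa [isClosed_Icc.closure_eq])
    have r : ContinuousWithinAt y (Icc ζ (1:ℝ)) x := by
      by_cases h : x ∈ Icc ζ (1:ℝ)
      · exact cR x h
      · exact continuousWithinAt_of_notMem_closure (by rwa [isClosed_Icc.closure_eq])
    exact l.union r
  refine ⟨y, dLf, dRf, cy, ?_, ?_, ?_, hdLc, hdRc, ?_, ?_, ?_, ?_, ?_, ?_⟩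
  · intro x hx
    by_cases h : x ≤ ζ
    · have : y x = yL x := if_pos h
      rw [this]; exact hposL x ⟨hx.1, h⟩
    · have : y x = yR x := if_neg h
      rw [this]; exact hposR x ⟨(not_le.1 h).le, hx.2⟩
  · intro x hx
    exact (hyL x hx).congr eqL (eqL x hx)
  · intro x hx
    exact (hyR x hx).congr eqR (eqR x hx)
  · intro x hx
    have : y x = yL x := eqL x (Ioo_subset_Icc_self hx)
    rw [this]; exact hdL2 x hx
  · intro x hx
    have : y x = yR x := eqR x (Ioo_subset_Icc_self hx)
    rw [this]; exact hdR2 x hx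
  · rw [eqL 0 (left_mem_Icc.2 h0')]; exact bc1
  · rw [eqL ζ (right_mem_Icc.2 h0')]; exact bc2
  · rw [eqR ζ (left_mem_Icc.2 h1')]; exact bc3
  · rw [eqR 1 (right_mem_Icc.2 h1')]; exact bc4

lemma necessity {k0 k1 μ ζ : ℝ} (hμ : -k0 ^ 4 ≤ μ) (hζ0 : 0 < ζ) (hζ1 : ζ < 1)
    (h : BrokenSol k0 k1 μ ζ) : 1 / 2 < k0 ^ 2 ∨ (k0 ^ 2 = 1 / 2 ∧ k1 ^ 2 = 1 / 2) := by
  obtain ⟨y, dL, dR, hyc, hpos, hyL, hyR, hdLc, hdRc, hdL2, hdR2, bc1, bc2, bc3, bc4⟩ := h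
  have hsubL : Icc (0:ℝ) ζ ⊆ Icc (0:ℝ) 1 := Icc_subset_Icc le_rfl hζ1.le
  have hsubR : Icc ζ (1:ℝ) ⊆ Icc (0:ℝ) 1 := Icc_subset_Icc hζ0.le le_rfl
  have hζm : ζ ∈ Icc (0:ℝ) 1 := ⟨hζ0.le, hζ1.le⟩
  have hyζpos : 0 < y ζ := hpos ζ hζm
  -- the auxiliary function h on the left interval
  set F : ℝ → ℝ := fun x => (dL x - k0 ^ 2 * y x) * exp (k0 ^ 2 * x) with hF_def
  set F' : ℝ → ℝ := fun x => -((μ + k0 ^ 4) * y x * exp (k0 ^ 2 * x)) with hF'_def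
  have hFc : ContinuousOn F (Icc (0:ℝ) ζ) := by
    apply ContinuousOn.mul
    · exact hdLc.sub ((hyc.mono hsubL).const_smul (k0 ^ 2))
    · exact (continuous_exp.comp (continuous_const.mul continuous_id)).continuousOn
  have hFd : ∀ x ∈ interior (Icc (0:ℝ) ζ), HasDerivAt F (F' x) x := by
    intro x hx
    rw [interior_Icc] at hx
    have hnx : Icc (0:ℝ) ζ ∈ 𝓝 x := Icc_mem_nhds hx.1 hx.2
    have hy' : HasDerivAt y (dL x) x := (hyL x (Ioo_subset_Icc_self hx)).hasDerivAt hnx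
    have hd' : HasDerivAt dL (-(μ * y x)) x := (hdL2 x hx).hasDerivAt hnx
    have he : HasDerivAt (fun x => exp (k0 ^ 2 * x)) (k0 ^ 2 * exp (k0 ^ 2 * x)) x := by
      have := (hasDerivAt_id x).const_mul (k0 ^ 2)
      simpa [mul_comm] using (this.exp)
    have := ((hd'.sub (hy'.const_mul (k0 ^ 2))).mul he)
    refine HasDerivAt.congr_deriv this ?_
    simp only [hF'_def, Pi.sub_apply]
    ring
  have hFanti : AntitoneOn F (Icc (0:ℝ) ζ) := by
    apply antitoneOn_of_hasDerivWithinAt_nonpos (convex_Icc _ _) hFc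
      (fun x hx => ((hFd x hx).hasDerivWithinAt))
    intro x hx
    rw [interior_Icc] at hx
    have : 0 < y x := hpos x (hsubL (Ioo_subset_Icc_self hx))
    have h4 : 0 ≤ μ + k0 ^ 4 := by linarith
    simp only [hF'_def, neg_nonpos]
    positivity
  have hF0 : F 0 = 0 := by simp only [hF_def]; rw [mul_zero, exp_zero, mul_one, bc1]
  have hFζ : F ζ ≤ 0 := by
    have := hFanti (left_mem_Icc.2 hζ0.le) (right_mem_Icc.2 hζ0.le) hζ0.le
    rwa [hF0] at this
  have hdLζ : dL ζ = y ζ / 2 := by linarith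
  have heζ : 0 < exp (k0 ^ 2 * ζ) := exp_pos _
  have hFζ' : (y ζ / 2 - k0 ^ 2 * y ζ) * exp (k0 ^ 2 * ζ) ≤ 0 := by
    rw [← hdLζ]; exact hFζ
  have hk012 : 1 / 2 ≤ k0 ^ 2 := by
    by_contra hc
    push_neg at hc
    have hpos2 : 0 < (y ζ / 2 - k0 ^ 2 * y ζ) * exp (k0 ^ 2 * ζ) := by
      apply mul_pos _ heζ
      nlinarith
    linarith
  rcases lt_or_eq_of_le hk012 with hlt | heq
  · exact Or.inl hlt
  -- k0^2 = 1/2 case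
  right
  refine ⟨heq.symm, ?_⟩
  have hk04 : k0 ^ 4 = 1 / 4 := by nlinarith
  have hFζ0 : F ζ = 0 := by
    simp only [hF_def]
    rw [hdLζ, ← heq]
    ring_nf
  -- F vanishes identically on [0, ζ]; deduce μ = -1/4
  have hμ14 : μ = -(1 / 4) := by
    have hmid : ζ / 2 ∈ Ioo (0:ℝ) ζ := ⟨by linarith, by linarith⟩
    have hmemL : ζ / 2 ∈ Icc (0:ℝ) ζ := Ioo_subset_Icc_self hmid
    have hF_eq : ∀ x ∈ Icc (0:ℝ) ζ, F x = 0 := by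
      intro x hx
      have h2 : F x ≤ F 0 := hFanti (left_mem_Icc.2 hζ0.le) hx hx.1
      have h3 : F ζ ≤ F x := hFanti hx (right_mem_Icc.2 hζ0.le) hx.2
      rw [hF0] at h2; rw [hFζ0] at h3; linarith
    have hnb : Icc (0:ℝ) ζ ∈ 𝓝 (ζ / 2) := Icc_mem_nhds hmid.1 hmid.2
    have hcongr : F =ᶠ[𝓝 (ζ / 2)] fun _ => (0:ℝ) :=
      Filter.eventuallyEq_of_mem hnb hF_eq
    have hzero : HasDerivAt F 0 (ζ / 2) :=
      (hasDerivAt_const (ζ / 2) (0:ℝ)).congr_of_eventuallyEq hcongr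
    have hD : HasDerivAt F (F' (ζ / 2)) (ζ / 2) := hFd (ζ / 2) (by rw [interior_Icc]; exact hmid)
    have huniq : F' (ζ / 2) = 0 := hD.unique hzero
    have hyp : 0 < y (ζ / 2) := hpos _ (hsubL hmemL)
    have hep : 0 < exp (k0 ^ 2 * (ζ / 2)) := exp_pos _
    simp only [hF'_def, neg_eq_zero] at huniq
    have : μ + k0 ^ 4 = 0 := by
      rcases mul_eq_zero.1 huniq with h | h
      · rcases mul_eq_zero.1 h with h | h
        · exact h
        · exact absurd h hyp.ne'
      · exact absurd h hep.ne'
    linarith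
  -- right interval: Q is constant
  set Q : ℝ → ℝ := fun x => (dR x + y x / 2) * exp (-(x / 2)) with hQ_def
  have hQc : ContinuousOn Q (Icc ζ (1:ℝ)) := by
    apply ContinuousOn.mul
    · exact hdRc.add ((hyc.mono hsubR).div_const 2)
    · exact (continuous_exp.comp ((continuous_id.div_const 2).neg)).continuousOn
  have hQd : ∀ x ∈ interior (Icc ζ (1:ℝ)), HasDerivAt Q 0 x := by
    intro x hx
    rw [interior_Icc] at hx
    have hnx : Icc ζ (1:ℝ) ∈ 𝓝 x := Icc_mem_nhds hx.1 hx.2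
    have hy' : HasDerivAt y (dR x) x := (hyR x (Ioo_subset_Icc_self hx)).hasDerivAt hnx
    have hd' : HasDerivAt dR (-(μ * y x)) x := (hdR2 x hx).hasDerivAt hnx
    have he : HasDerivAt (fun x : ℝ => exp (-(x / 2))) (-(1 / 2) * exp (-(x / 2))) x := by
      have : HasDerivAt (fun x : ℝ => -(x / 2)) (-(1 / 2)) x := by
        exact ((hasDerivAt_id x).div_const 2).neg
      simpa [mul_comm] using this.exp
    have h2 := (hd'.add (hy'.div_const 2)).mul he
    have h3 : (-(μ * y x) + dR x / 2) * exp (-(x / 2)) +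
        (dR x + y x / 2) * (-(1 / 2) * exp (-(x / 2))) = 0 := by
      rw [hμ14]; ring
    simp only [Pi.add_apply] at h2
    rw [h3] at h2
    exact h2
  have hQmono : MonotoneOn Q (Icc ζ (1:ℝ)) :=
    monotoneOn_of_hasDerivWithinAt_nonneg (convex_Icc _ _) hQc
      (fun x hx => (hQd x hx).hasDerivWithinAt) (fun x _ => le_rfl)
  have hQanti : AntitoneOn Q (Icc ζ (1:ℝ)) :=
    antitoneOn_of_hasDerivWithinAt_nonpos (convex_Icc _ _) hQc
      (fun x hx => (hQd x hx).hasDerivWithinAt) (fun x _ => le_rfl)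
  have hQζ : Q ζ = 0 := by
    simp only [hQ_def]
    have : dR ζ + y ζ / 2 = 0 := by linarith
    rw [this, zero_mul]
  have hQ1 : Q 1 = 0 := by
    have h1 := hQmono (left_mem_Icc.2 hζ1.le) (right_mem_Icc.2 hζ1.le) hζ1.le
    have h2 := hQanti (left_mem_Icc.2 hζ1.le) (right_mem_Icc.2 hζ1.le) hζ1.le
    rw [hQζ] at h1 h2; linarith
  have hy1 : 0 < y 1 := hpos 1 (right_mem_Icc.2 zero_le_one)
  have he1 : 0 < exp (-(1 / 2 : ℝ)) := exp_pos _
  simp only [hQ_def] at hQ1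
  have : dR 1 + y 1 / 2 = 0 := by
    rcases mul_eq_zero.1 hQ1 with h | h
    · exact h
    · exact absurd h he1.ne'
  nlinarith

lemma caseA {k0 k1 : ℝ} (hk0 : k0 ^ 2 = 1 / 2) (hk1 : k1 ^ 2 = 1 / 2) :
    BrokenSol k0 k1 (-(1 / 4)) (1 / 2) := by
  have hdL : ∀ x : ℝ, HasDerivAt (fun x => exp (x / 2)) (exp (x / 2) * (1 / 2)) x :=
    fun x => ((hasDerivAt_id x).div_const 2).exp
  have hdR : ∀ x : ℝ, HasDerivAt (fun x => exp ((1 - x) / 2)) (exp ((1 - x) / 2) * (-1 / 2)) x := by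
    intro x
    have h1 : HasDerivAt (fun x : ℝ => (1 - x) / 2) (-1 / 2) x := by
      have := ((hasDerivAt_const x (1:ℝ)).sub (hasDerivAt_id x)).div_const 2
      simpa using this
    exact h1.exp
  have hdL2 : ∀ x : ℝ,
      HasDerivAt (fun x => exp (x / 2) * (1 / 2)) (exp (x / 2) * (1 / 2) * (1 / 2)) x :=
    fun x => (hdL x).mul_const (1 / 2)
  have hdR2 : ∀ x : ℝ,
      HasDerivAt (fun x => exp ((1 - x) / 2) * (-1 / 2))
        (exp ((1 - x) / 2) * (-1 / 2) * (-1 / 2)) x :=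
    fun x => (hdR x).mul_const (-1 / 2)
  apply glue (by norm_num) (by norm_num)
    (fun x => exp (x / 2)) (fun x => exp ((1 - x) / 2))
    (fun x => exp (x / 2) * (1 / 2)) (fun x => exp ((1 - x) / 2) * (-1 / 2))
  · exact fun x _ => (hdL x).hasDerivWithinAt
  · exact fun x _ => (hdR x).hasDerivWithinAt
  · exact fun x _ => exp_pos _
  · exact fun x _ => exp_pos _
  · exact ((continuous_exp.comp (continuous_id.div_const 2)).mul continuous_const).continuousOn
  · exact ((continuous_exp.comp ((continuous_const.sub continuous_id).div_const 2)).mul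
      continuous_const).continuousOn
  · intro x _
    have h3 : -(-(1 / 4) * exp (x / 2)) = exp (x / 2) * (1 / 2) * (1 / 2) := by ring
    exact (h3 ▸ (hdL2 x)).hasDerivWithinAt
  · intro x _
    have h3 : -(-(1 / 4) * exp ((1 - x) / 2)) = exp ((1 - x) / 2) * (-1 / 2) * (-1 / 2) := by ring
    exact (h3 ▸ (hdR2 x)).hasDerivWithinAt
  · norm_num
  · rw [hk0]; norm_num
  · norm_num; ring
  · norm_num; ring
  · rw [hk1]; norm_num

lemma caseB {k0 k1 : ℝ} (h0 : 1 / 2 < k0 ^ 2) (h01 : k0 ^ 2 ≤ k1 ^ 2)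
    (hp : 1 / k0 ^ 2 + 1 / k1 ^ 2 = 3) :
    BrokenSol k0 k1 0 (2 - 1 / k0 ^ 2) := by
  have hk0p : (0:ℝ) < k0 ^ 2 := by linarith
  have hk1p : (0:ℝ) < k1 ^ 2 := by linarith
  have hik0 : 1 / k0 ^ 2 < 2 := by rw [div_lt_iff₀ hk0p]; linarith
  have hik1 : 1 / k1 ^ 2 ≤ 1 / k0 ^ 2 := by
    apply div_le_div_of_nonneg_left (by norm_num) hk0p h01
  have hik0' : 1 < 1 / k0 ^ 2 := by linarith
  set ζ : ℝ := 2 - 1 / k0 ^ 2 with hζ_def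
  have hζ0 : 0 < ζ := by simp only [hζ_def]; linarith
  have hζ1 : ζ < 1 := by simp only [hζ_def]; linarith
  apply glue hζ0 hζ1
    (fun x => x + 1 / k0 ^ 2) (fun x => 1 + 1 / k1 ^ 2 - x)
    (fun _ => 1) (fun _ => -1)
  · intro x _
    exact ((hasDerivAt_id x).add_const _).hasDerivWithinAt
  · intro x _
    have h6 : HasDerivAt (fun x : ℝ => 1 + 1 / k1 ^ 2 - x) (-1) x :=
      (hasDerivAt_id x).const_sub (1 + 1 / k1 ^ 2)
    exact h6.hasDerivWithinAt
  · intro x hx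
    have h4 : 0 < 1 / k0 ^ 2 := by positivity
    have h5 := hx.1; linarith
  · intro x hx
    have h4 : 0 < 1 / k1 ^ 2 := by positivity
    have h5 := hx.2; linarith
  · exact continuousOn_const
  · exact continuousOn_const
  · intro x _
    have h3 : -((0:ℝ) * (x + 1 / k0 ^ 2)) = 0 := by ring
    rw [h3]
    exact (hasDerivAt_const x (1:ℝ)).hasDerivWithinAt
  · intro x _
    have h3 : -((0:ℝ) * (1 + 1 / k1 ^ 2 - x)) = 0 := by ring
    rw [h3]
    exact (hasDerivAt_const x (-1:ℝ)).hasDerivWithinAt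
  · show ζ + 1 / k0 ^ 2 = 1 + 1 / k1 ^ 2 - ζ
    rw [hζ_def]; linarith
  · show 1 - k0 ^ 2 * (0 + 1 / k0 ^ 2) = 0
    rw [zero_add, mul_one_div_cancel hk0p.ne', sub_self]
  · show 2 * 1 - (ζ + 1 / k0 ^ 2) = 0
    rw [hζ_def]; ring
  · show 2 * -1 + (1 + 1 / k1 ^ 2 - ζ) = 0
    rw [hζ_def]; linarith
  · show -1 + k1 ^ 2 * (1 + 1 / k1 ^ 2 - 1) = 0
    rw [add_sub_cancel_left, mul_one_div_cancel hk1p.ne']; norm_num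

lemma arctan_le_self' {t : ℝ} (ht : 0 ≤ t) : arctan t ≤ t := by
  have hmono : Monotone (fun t : ℝ => t - arctan t) := by
    apply monotone_of_hasDerivAt_nonneg (f' := fun t => 1 - 1 / (1 + t ^ 2))
    · exact fun x => (hasDerivAt_id x).sub (Real.hasDerivAt_arctan x)
    · intro x
      have h1 : (0:ℝ) < 1 + x ^ 2 := by positivity
      have : 1 / (1 + x ^ 2) ≤ 1 := by rw [div_le_one h1]; nlinarith
      simp only [Pi.zero_apply]; linarith
  have := hmono ht
  simpa [Real.arctan_zero] using this
lemma le_arctan' {t : ℝ} (ht : 0 ≤ t) : t - t ^ 3 / 3 ≤ arctan t := by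
  have hmono : Monotone (fun t : ℝ => arctan t - t + t ^ 3 / 3) := by
    apply monotone_of_hasDerivAt_nonneg
      (f' := fun t => 1 / (1 + t ^ 2) - 1 + 3 * t ^ 2 / 3)
    · intro x
      have h1 := ((Real.hasDerivAt_arctan x).sub (hasDerivAt_id x)).add
        ((hasDerivAt_pow 3 x).div_const 3)
      have h2 : (1 / (1 + x ^ 2) - 1) + (3:ℕ) * x ^ (3 - 1) / 3
          = 1 / (1 + x ^ 2) - 1 + 3 * x ^ 2 / 3 := by norm_num
      rw [h2] at h1
      exact h1
    · intro x
      have h1 : (0:ℝ) < 1 + x ^ 2 := by positivity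
      have : 1 - x ^ 2 ≤ 1 / (1 + x ^ 2) := by
        rw [le_div_iff₀ h1]; nlinarith
      simp only [Pi.zero_apply]; linarith
  have := hmono ht
  simp only [Real.arctan_zero] at this
  norm_num at this
  linarith
lemma arctan_nonneg' {t : ℝ} (ht : 0 ≤ t) : 0 ≤ arctan t := by
  rcases eq_or_lt_of_le ht with h | h
  · simp [← h]
  · exact le_of_lt (by rw [← Real.arctan_zero]; exact Real.arctan_strictMono h)
lemma sin_arctan' (t : ℝ) : Real.sin (arctan t) = t * Real.cos (arctan t) := by
  rw [Real.sin_arctan, Real.cos_arctan]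
  ring

lemma caseC {k0 k1 : ℝ} (h0 : 1 / 2 < k0 ^ 2) (h01 : k0 ^ 2 ≤ k1 ^ 2)
    (hp : 1 / k0 ^ 2 + 1 / k1 ^ 2 < 3) :
    ∃ μ : ℝ, 0 ≤ μ ∧ ∃ ζ ∈ Ioo (0:ℝ) 1, BrokenSol k0 k1 μ ζ := by
  have hk0p : (0:ℝ) < k0 ^ 2 := by linarith
  have hk1p : (0:ℝ) < k1 ^ 2 := by linarith
  set g : ℝ → ℝ := fun m => m - 2 * arctan (2 * m) + arctan (m / k0 ^ 2) + arctan (m / k1 ^ 2)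
    with hg_def
  have hgc : Continuous g := by
    have c1 : Continuous fun m : ℝ => 2 * arctan (2 * m) :=
      continuous_const.mul (Real.continuous_arctan.comp (continuous_const.mul continuous_id))
    have c2 : Continuous fun m : ℝ => arctan (m / k0 ^ 2) :=
      Real.continuous_arctan.comp (continuous_id.div_const _)
    have c3 : Continuous fun m : ℝ => arctan (m / k1 ^ 2) :=
      Real.continuous_arctan.comp (continuous_id.div_const _)
    exact ((continuous_id.sub c1).add c2).add c3
  have hεp : 0 < 3 - (1 / k0 ^ 2 + 1 / k1 ^ 2) := by linarith
  obtain ⟨m₀, hm₀p, hm₀1, hm₀sq⟩ : ∃ t : ℝ, 0 < t ∧ t ≤ 1 ∧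
      t ^ 2 < 3 * (3 - (1 / k0 ^ 2 + 1 / k1 ^ 2)) / 16 := by
    set ε : ℝ := 3 - (1 / k0 ^ 2 + 1 / k1 ^ 2) with hε_def
    have hs : 0 < Real.sqrt (3 * ε / 16) := Real.sqrt_pos.2 (by positivity)
    refine ⟨min 1 (Real.sqrt (3 * ε / 16) / 2), lt_min one_pos (by linarith), min_le_left _ _, ?_⟩
    have h1 : min 1 (Real.sqrt (3 * ε / 16) / 2) ≤ Real.sqrt (3 * ε / 16) / 2 := min_le_right _ _
    have h2 : (0:ℝ) < min 1 (Real.sqrt (3 * ε / 16) / 2) := lt_min one_pos (by linarith)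
    have h4 : Real.sqrt (3 * ε / 16) ^ 2 = 3 * ε / 16 := Real.sq_sqrt (by positivity)
    nlinarith
  have hgm₀ : g m₀ < 0 := by
    have h1 : arctan (2 * m₀) ≥ 2 * m₀ - (2 * m₀) ^ 3 / 3 := le_arctan' (by linarith)
    have h2 : arctan (m₀ / k0 ^ 2) ≤ m₀ / k0 ^ 2 := arctan_le_self' (by positivity)
    have h3 : arctan (m₀ / k1 ^ 2) ≤ m₀ / k1 ^ 2 := arctan_le_self' (by positivity)
    have hcube := mul_lt_mul_of_pos_left hm₀sq hm₀p
    simp only [hg_def]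
    have expand : m₀ * (3 * (3 - (1 / k0 ^ 2 + 1 / k1 ^ 2)) / 16)
        = (9 / 16) * m₀ - (3 / 16) * (m₀ / k0 ^ 2) - (3 / 16) * (m₀ / k1 ^ 2) := by ring
    rw [expand] at hcube
    nlinarith [h1, h2, h3, hcube]
  have hgπ : 0 < g π := by
    have h1 : arctan (2 * π) < π / 2 := Real.arctan_lt_pi_div_two _
    have h2 : 0 ≤ arctan (π / k0 ^ 2) := arctan_nonneg' (by positivity)
    have h3 : 0 ≤ arctan (π / k1 ^ 2) := arctan_nonneg' (by positivity)
    simp only [hg_def]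
    linarith
  have hm₀π : m₀ ≤ π := le_trans hm₀1 (by linarith [Real.pi_gt_three])
  obtain ⟨m, hm_mem, hgm⟩ := intermediate_value_Icc hm₀π hgc.continuousOn
    ⟨hgm₀.le, hgπ.le⟩
  have hmp : 0 < m := lt_of_lt_of_le hm₀p hm_mem.1
  simp only [hg_def] at hgm
  clear hgm₀ hgπ hgc hg_def hm₀π hm₀p hm₀1 hm₀sq hm_mem
  -- the angles
  set a : ℝ := arctan (k0 ^ 2 / m) with ha_def
  set b : ℝ := arctan ((1 / 2) / m) with hb_def
  set d : ℝ := arctan (k1 ^ 2 / m) with hd_def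
  have hkey : m = a + d - 2 * b := by
    have hA : a = π / 2 - arctan (m / k0 ^ 2) := by
      rw [ha_def, show k0 ^ 2 / m = (m / k0 ^ 2)⁻¹ by rw [inv_div],
        Real.arctan_inv_of_pos (by positivity)]
    have hB : b = π / 2 - arctan (2 * m) := by
      rw [hb_def, show (1 / 2 : ℝ) / m = (2 * m)⁻¹ by rw [div_div, one_div],
        Real.arctan_inv_of_pos (by positivity)]
    have hD : d = π / 2 - arctan (m / k1 ^ 2) := by
      rw [hd_def, show k1 ^ 2 / m = (m / k1 ^ 2)⁻¹ by rw [inv_div],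
        Real.arctan_inv_of_pos (by positivity)]
    rw [hA, hB, hD]
    linarith
  have hba : b < a := by
    apply Real.arctan_strictMono
    rw [div_lt_div_iff₀ hmp hmp]
    nlinarith
  have had : a ≤ d := by
    apply Real.arctan_strictMono.monotone
    gcongr
  have hb0 : 0 < b := by
    rw [hb_def, ← Real.arctan_zero]
    exact Real.arctan_strictMono (by positivity)
  have ha2 : a < π / 2 := Real.arctan_lt_pi_div_two _
  have hd2 : d < π / 2 := Real.arctan_lt_pi_div_two _
  set ζ : ℝ := (a - b) / m with hζ_def
  have hζ0 : 0 < ζ := div_pos (by linarith) hmp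
  have hζ1 : ζ < 1 := by
    rw [hζ_def, div_lt_one hmp]
    linarith
  have hmζ : m * ζ = a - b := by
    rw [hζ_def]; field_simp
  set c : ℝ := a - 2 * b with hc_def
  have hmc : m - c = d := by rw [hc_def]; linarith
  have hmζc : m * ζ - c = b := by rw [hmζ, hc_def]; ring
  have hmζa : m * ζ - a = -b := by rw [hmζ]; ring
  have hm1c : m * 1 - c = d := by rw [mul_one]; exact hmc
  -- derivative helpers
  have huL : ∀ x : ℝ, HasDerivAt (fun x => m * x - a) m x := by
    intro x
    simpa using ((hasDerivAt_id x).const_mul m).sub_const a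
  have huR : ∀ x : ℝ, HasDerivAt (fun x => m * x - c) m x := by
    intro x
    simpa using ((hasDerivAt_id x).const_mul m).sub_const c
  refine ⟨m ^ 2, by positivity, ζ, ⟨hζ0, hζ1⟩, ?_⟩
  apply glue hζ0 hζ1
    (fun x => Real.cos (m * x - a)) (fun x => Real.cos (m * x - c))
    (fun x => -Real.sin (m * x - a) * m) (fun x => -Real.sin (m * x - c) * m)
  · exact fun x _ => ((huL x).cos).hasDerivWithinAt
  · exact fun x _ => ((huR x).cos).hasDerivWithinAt
  · intro x hx
    apply Real.cos_pos_of_mem_Ioo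
    constructor
    · have h6 : 0 ≤ m * x := mul_nonneg hmp.le hx.1
      linarith
    · have h6 : m * x ≤ m * ζ := mul_le_mul_of_nonneg_left hx.2 hmp.le
      rw [hmζ] at h6
      linarith [Real.pi_pos]
  · intro x hx
    apply Real.cos_pos_of_mem_Ioo
    constructor
    · have h6 : m * ζ ≤ m * x := mul_le_mul_of_nonneg_left hx.1 hmp.le
      have h7 : b ≤ m * x - c := by rw [← hmζc]; linarith
      linarith [Real.pi_pos]
    · have h6 : m * x ≤ m * 1 := mul_le_mul_of_nonneg_left hx.2 hmp.le
      have h7 : m * x - c ≤ d := by rw [← hmc]; linarith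
      linarith
  · exact ((Real.continuous_sin.comp ((continuous_const.mul continuous_id).sub
      continuous_const)).neg.mul continuous_const).continuousOn
  · exact ((Real.continuous_sin.comp ((continuous_const.mul continuous_id).sub
      continuous_const)).neg.mul continuous_const).continuousOn
  · intro x _
    have h1 := (((huL x).sin).neg).mul_const m
    have h2 : -(Real.cos (m * x - a) * m) * m = -(m ^ 2 * Real.cos (m * x - a)) := by ring
    rw [h2] at h1
    exact h1.hasDerivWithinAt
  · intro x _
    have h1 := (((huR x).sin).neg).mul_const m
    have h2 : -(Real.cos (m * x - c) * m) * m = -(m ^ 2 * Real.cos (m * x - c)) := by ring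
    rw [h2] at h1
    exact h1.hasDerivWithinAt
  · show Real.cos (m * ζ - a) = Real.cos (m * ζ - c)
    rw [hmζa, hmζc, Real.cos_neg]
  · show -Real.sin (m * 0 - a) * m - k0 ^ 2 * Real.cos (m * 0 - a) = 0
    rw [mul_zero, zero_sub, Real.sin_neg, Real.cos_neg, neg_neg, ha_def, sin_arctan',
      mul_right_comm, div_mul_cancel₀ _ hmp.ne']
    ring
  · show 2 * (-Real.sin (m * ζ - a) * m) - Real.cos (m * ζ - a) = 0
    rw [hmζa, Real.sin_neg, Real.cos_neg, neg_neg, hb_def, sin_arctan',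
      mul_right_comm, div_mul_cancel₀ _ hmp.ne']
    ring
  · show 2 * (-Real.sin (m * ζ - c) * m) + Real.cos (m * ζ - c) = 0
    rw [hmζc, hb_def, sin_arctan', neg_mul, mul_right_comm, div_mul_cancel₀ _ hmp.ne']
    ring
  · show -Real.sin (m * 1 - c) * m + k1 ^ 2 * Real.cos (m * 1 - c) = 0
    rw [hm1c, hd_def, sin_arctan', neg_mul, mul_right_comm, div_mul_cancel₀ _ hmp.ne']
    ring

noncomputable def myAtanh (t : ℝ) : ℝ := Real.log ((1 + t) / (1 - t)) / 2

lemma myAtanh_exp {t : ℝ} (h0 : 0 ≤ t) (h1 : t < 1) :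
    Real.exp (myAtanh t) * Real.exp (myAtanh t) = (1 + t) / (1 - t) := by
  rw [← Real.exp_add, myAtanh]
  have : Real.log ((1 + t) / (1 - t)) / 2 + Real.log ((1 + t) / (1 - t)) / 2
      = Real.log ((1 + t) / (1 - t)) := by ring
  rw [this, Real.exp_log (div_pos (by linarith) (by linarith))]

lemma sinh_myAtanh {t : ℝ} (h0 : 0 ≤ t) (h1 : t < 1) :
    Real.sinh (myAtanh t) = t * Real.cosh (myAtanh t) := by
  have hE := myAtanh_exp h0 h1
  set E := Real.exp (myAtanh t) with hE_def
  have hEpos : 0 < E := Real.exp_pos _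
  have h2 : E * E * (1 - t) = 1 + t := by
    rw [hE, div_mul_cancel₀ _ (by linarith : (1:ℝ) - t ≠ 0).symm.symm]
  rw [Real.sinh_eq, Real.cosh_eq, Real.exp_neg, ← hE_def]
  field_simp
  nlinarith [h2]

lemma myAtanh_mono {s t : ℝ} (hs : 0 ≤ s) (hst : s ≤ t) (ht : t < 1) :
    myAtanh s ≤ myAtanh t := by
  have h1 : (0:ℝ) < 1 - t := by linarith
  have h2 : (0:ℝ) < 1 - s := by linarith
  have hlog : Real.log ((1 + s) / (1 - s)) ≤ Real.log ((1 + t) / (1 - t)) := by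
    apply Real.log_le_log (div_pos (by linarith) h2)
    rw [div_le_div_iff₀ h2 h1]
    nlinarith
  rw [myAtanh, myAtanh]
  linarith

lemma myAtanh_strictMono {s t : ℝ} (hs : 0 ≤ s) (hst : s < t) (ht : t < 1) :
    myAtanh s < myAtanh t := by
  have h1 : (0:ℝ) < 1 - t := by linarith
  have h2 : (0:ℝ) < 1 - s := by linarith
  have hlog : Real.log ((1 + s) / (1 - s)) < Real.log ((1 + t) / (1 - t)) := by
    apply Real.log_lt_log (div_pos (by linarith) h2)
    rw [div_lt_div_iff₀ h2 h1]
    nlinarith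
  rw [myAtanh, myAtanh]
  linarith

lemma two_mul_sub_div_le_log {x : ℝ} (hx : 1 ≤ x) : 2 * (x - 1) / (x + 1) ≤ Real.log x := by
  have hmono : MonotoneOn (fun x : ℝ => Real.log x - 2 * (x - 1) / (x + 1)) (Ici 1) := by
    apply monotoneOn_of_hasDerivWithinAt_nonneg (convex_Ici 1)
      (f' := fun x => 1 / x - 4 / (x + 1) ^ 2)
    · apply ContinuousOn.sub
      · exact Real.continuousOn_log.mono (fun x hx => by
          simp only [mem_compl_iff, mem_singleton_iff]
          intro h; rw [h] at hx; simp at hx; linarith)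
      · apply ContinuousOn.div
        · exact (continuous_const.mul (continuous_id.sub continuous_const)).continuousOn
        · exact (continuous_id.add continuous_const).continuousOn
        · intro x hx; simp only [mem_Ici] at hx; positivity
    · intro x hx
      rw [interior_Ici] at hx
      have hx0 : (0:ℝ) < x := by simp only [mem_Ioi] at hx; linarith
      have h1 : HasDerivAt Real.log (1 / x) x := by
        simpa [one_div] using Real.hasDerivAt_log hx0.ne'
      have h2 : HasDerivAt (fun x : ℝ => 2 * (x - 1) / (x + 1))
          ((2 * (x + 1) - 2 * (x - 1) * 1) / (x + 1) ^ 2) x := by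
        apply HasDerivAt.div
        · simpa using ((hasDerivAt_id x).sub_const 1).const_mul 2
        · simpa using (hasDerivAt_id x).add_const 1
        · simp only [mem_Ioi] at hx; intro h; linarith [h]
      have h3 : (2 * (x + 1) - 2 * (x - 1) * 1) / (x + 1) ^ 2 = 4 / (x + 1) ^ 2 := by
        congr 1; ring
      rw [h3] at h2
      exact ((h1.sub h2)).hasDerivWithinAt.mono interior_subset
    · intro x hx
      rw [interior_Ici] at hx
      simp only [mem_Ioi] at hx
      rw [sub_nonneg, div_le_div_iff₀ (by positivity) (by linarith)]
      nlinarith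
  have := hmono (mem_Ici.2 le_rfl) (mem_Ici.2 hx) hx
  simp only [Real.log_one] at this
  have h4 : 2 * ((1:ℝ) - 1) / (1 + 1) = 0 := by norm_num
  rw [h4] at this
  linarith

lemma le_myAtanh {t : ℝ} (h0 : 0 ≤ t) (h1 : t < 1) : t ≤ myAtanh t := by
  have hx : 1 ≤ (1 + t) / (1 - t) := by
    rw [le_div_iff₀ (by linarith)]; linarith
  have := two_mul_sub_div_le_log hx
  have hne : (1:ℝ) - t ≠ 0 := by linarith
  have hden : (1 + t) / (1 - t) + 1 ≠ 0 := by
    have h2 : (0:ℝ) < (1 + t) / (1 - t) + 1 := by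
      have := div_pos (by linarith : (0:ℝ) < 1 + t) (by linarith : (0:ℝ) < 1 - t)
      linarith
    linarith
  have heq : 2 * ((1 + t) / (1 - t) - 1) / ((1 + t) / (1 - t) + 1) = 2 * t := by
    rw [div_eq_iff hden]
    field_simp
    ring
  rw [heq] at this
  rw [myAtanh]
  linarith

lemma myAtanh_le {t : ℝ} (h0 : 0 ≤ t) (h1 : t ≤ 1 / 2) : myAtanh t ≤ t + t ^ 2 := by
  have ht1 : (0:ℝ) < 1 - t := by linarith
  have ha : Real.log (1 + t) ≤ t := by
    have := Real.log_le_sub_one_of_pos (by linarith : (0:ℝ) < 1 + t)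
    linarith
  have hb : -Real.log (1 - t) ≤ t + 2 * t ^ 2 := by
    have h2 := Real.log_le_sub_one_of_pos (by positivity : (0:ℝ) < (1 - t)⁻¹)
    rw [Real.log_inv] at h2
    have h3 : (1 - t)⁻¹ - 1 = t / (1 - t) := by field_simp; ring
    rw [h3] at h2
    have h4 : t / (1 - t) ≤ t + 2 * t ^ 2 := by
      rw [div_le_iff₀ ht1]
      nlinarith
    linarith
  rw [myAtanh, Real.log_div (by linarith) (by linarith)]
  linarith

lemma myAtanh_ge_half_log {t : ℝ} (h0 : 0 ≤ t) (h1 : t < 1) :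
    -Real.log (1 - t) / 2 ≤ myAtanh t := by
  rw [myAtanh, Real.log_div (by linarith) (by linarith)]
  have := Real.log_nonneg (by linarith : (1:ℝ) ≤ 1 + t)
  linarith

lemma caseD {k0 k1 : ℝ} (h0 : 1 / 2 < k0 ^ 2) (h01 : k0 ^ 2 ≤ k1 ^ 2)
    (hp : 3 < 1 / k0 ^ 2 + 1 / k1 ^ 2) :
    ∃ μ : ℝ, -k0 ^ 4 ≤ μ ∧ ∃ ζ ∈ Ioo (0:ℝ) 1, BrokenSol k0 k1 μ ζ := by
  have hk0p : (0:ℝ) < k0 ^ 2 := by linarith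
  have hk1p : (0:ℝ) < k1 ^ 2 := by linarith
  set G : ℝ → ℝ := fun c =>
    2 * myAtanh (2 * c) - myAtanh (c / k0 ^ 2) - myAtanh (c / k1 ^ 2) - c with hG_def
  -- upper IVT point
  set B0 : ℝ := myAtanh ((1 / 2) / k0 ^ 2) with hB0_def
  have hhalfk0 : (0:ℝ) ≤ (1 / 2) / k0 ^ 2 := by positivity
  have hhalfk0' : (1 / 2) / k0 ^ 2 < 1 := by
    rw [div_lt_one hk0p]; linarith
  have hB0nn : 0 ≤ B0 := le_trans hhalfk0 (le_myAtanh hhalfk0 hhalfk0')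
  set c₁ : ℝ := (1 - Real.exp (-(2 * B0 + 3))) / 2 with hc₁_def
  have hexp1 : Real.exp (-(2 * B0 + 3)) < 1 := by
    rw [Real.exp_lt_one_iff]; linarith
  have hexp0 : 0 < Real.exp (-(2 * B0 + 3)) := Real.exp_pos _
  have hc₁0 : 0 < c₁ := by rw [hc₁_def]; linarith
  have hc₁half : c₁ < 1 / 2 := by rw [hc₁_def]; linarith
  have h2c₁ : 2 * c₁ = 1 - Real.exp (-(2 * B0 + 3)) := by rw [hc₁_def]; ring
  have h2c₁1 : 2 * c₁ < 1 := by rw [h2c₁]; linarith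
  have hGc₁ : 0 < G c₁ := by
    have hβ : B0 + 3 / 2 ≤ myAtanh (2 * c₁) := by
      have := myAtanh_ge_half_log (by linarith : (0:ℝ) ≤ 2 * c₁) h2c₁1
      have hlog : Real.log (1 - 2 * c₁) = -(2 * B0 + 3) := by
        rw [h2c₁, show (1:ℝ) - (1 - Real.exp (-(2 * B0 + 3))) = Real.exp (-(2 * B0 + 3)) by ring,
          Real.log_exp]
      rw [hlog] at this
      linarith
    have hα : myAtanh (c₁ / k0 ^ 2) ≤ B0 := by
      rw [hB0_def]
      apply myAtanh_mono (by positivity) _ hhalfk0'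
      gcongr
    have hδ : myAtanh (c₁ / k1 ^ 2) ≤ B0 := by
      rw [hB0_def]
      apply myAtanh_mono (by positivity) _ hhalfk0'
      calc c₁ / k1 ^ 2 ≤ c₁ / k0 ^ 2 := by gcongr <;> linarith
        _ ≤ (1 / 2) / k0 ^ 2 := by gcongr <;> linarith
    simp only [hG_def]
    linarith
  -- lower IVT point
  obtain ⟨c₀, hc₀0, hc₀c₁, hc₀quarter, hc₀small⟩ : ∃ t : ℝ, 0 < t ∧ t ≤ c₁ / 2 ∧ t ≤ 1 / 4 ∧
      t ≤ (1 / k0 ^ 2 + 1 / k1 ^ 2 - 3) / 16 := by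
    refine ⟨min (c₁ / 2) (min (1 / 4) ((1 / k0 ^ 2 + 1 / k1 ^ 2 - 3) / 16)), ?_, min_le_left _ _,
      le_trans (min_le_right _ _) (min_le_left _ _),
      le_trans (min_le_right _ _) (min_le_right _ _)⟩
    apply lt_min (by linarith)
    apply lt_min (by norm_num)
    linarith
  have hc₀half : c₀ < 1 / 2 := by linarith
  have hGc₀ : G c₀ < 0 := by
    have h1 : myAtanh (2 * c₀) ≤ 2 * c₀ + (2 * c₀) ^ 2 :=
      myAtanh_le (by linarith) (by linarith)
    have h2 : c₀ / k0 ^ 2 ≤ myAtanh (c₀ / k0 ^ 2) :=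
      le_myAtanh (by positivity) (by rw [div_lt_one hk0p]; linarith)
    have h3 : c₀ / k1 ^ 2 ≤ myAtanh (c₀ / k1 ^ 2) :=
      le_myAtanh (by positivity) (by rw [div_lt_one hk1p]; linarith)
    have h4 : c₀ * (1 / k0 ^ 2 + 1 / k1 ^ 2 - 3) ≤ c₀ / k0 ^ 2 + c₀ / k1 ^ 2 - 3 * c₀ := by
      have : c₀ * (1 / k0 ^ 2 + 1 / k1 ^ 2 - 3) = c₀ / k0 ^ 2 + c₀ / k1 ^ 2 - 3 * c₀ := by ring
      linarith [this.le]
    have h5 : 8 * c₀ ^ 2 < c₀ * (1 / k0 ^ 2 + 1 / k1 ^ 2 - 3) := by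
      have h6 : 16 * c₀ ≤ 1 / k0 ^ 2 + 1 / k1 ^ 2 - 3 := by linarith
      nlinarith
    simp only [hG_def]
    nlinarith
  -- continuity of G on [c₀, c₁]
  have hGcont : ContinuousOn G (Icc c₀ c₁) := by
    have key : ∀ f : ℝ → ℝ, Continuous f → (∀ x ∈ Icc c₀ c₁, 0 ≤ f x ∧ f x < 1) →
        ContinuousOn (fun c => myAtanh (f c)) (Icc c₀ c₁) := by
      intro f hf hlt
      simp only [myAtanh]
      apply ContinuousOn.div_const
      apply ContinuousOn.log
      · apply ContinuousOn.div
        · exact (continuous_const.add hf).continuousOn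
        · exact (continuous_const.sub hf).continuousOn
        · intro x hx
          have := (hlt x hx).2
          intro h; rw [sub_eq_zero] at h; linarith
      · intro x hx
        obtain ⟨h2, h1⟩ := hlt x hx
        exact (div_pos (by linarith) (by linarith)).ne'
    have hb1 : ∀ x ∈ Icc c₀ c₁, 0 ≤ 2 * x ∧ 2 * x < 1 := by
      intro x hx
      exact ⟨by nlinarith [hx.1], by nlinarith [hx.2]⟩
    have hb2 : ∀ x ∈ Icc c₀ c₁, 0 ≤ x / k0 ^ 2 ∧ x / k0 ^ 2 < 1 := by
      intro x hx
      have h6 := hx.1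
      refine ⟨div_nonneg (by linarith) hk0p.le, ?_⟩
      rw [div_lt_one hk0p]; linarith [hx.2]
    have hb3 : ∀ x ∈ Icc c₀ c₁, 0 ≤ x / k1 ^ 2 ∧ x / k1 ^ 2 < 1 := by
      intro x hx
      have h6 := hx.1
      refine ⟨div_nonneg (by linarith) hk1p.le, ?_⟩
      rw [div_lt_one hk1p]; linarith [hx.2]
    have k1' : ContinuousOn (fun c => 2 * myAtanh (2 * c)) (Icc c₀ c₁) :=
      continuousOn_const.mul (key _ (continuous_const.mul continuous_id) hb1)
    have k2' : ContinuousOn (fun c => myAtanh (c / k0 ^ 2)) (Icc c₀ c₁) :=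
      key _ (continuous_id.div_const _) hb2
    have k3' : ContinuousOn (fun c => myAtanh (c / k1 ^ 2)) (Icc c₀ c₁) :=
      key _ (continuous_id.div_const _) hb3
    simp only [hG_def]
    exact ((k1'.sub k2').sub k3').sub continuousOn_id
  have hc₀c₁' : c₀ ≤ c₁ := by linarith
  obtain ⟨c, hc_mem, hGc⟩ := intermediate_value_Icc hc₀c₁' hGcont ⟨hGc₀.le, hGc₁.le⟩
  have hcp : 0 < c := lt_of_lt_of_le hc₀0 hc_mem.1
  have hchalf : c < 1 / 2 := lt_of_le_of_lt hc_mem.2 hc₁half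
  simp only [hG_def] at hGc
  clear hGc₀ hGc₁ hGcont hG_def hc₀0 hc₀c₁ hc₀quarter hc₀small hc₀half hc₁0 hc₁half h2c₁ h2c₁1
    hexp0 hexp1 hB0nn hc_mem hc₀c₁'
  -- the parameters
  have h2c : (0:ℝ) ≤ 2 * c := by linarith
  have h2c1 : 2 * c < 1 := by linarith
  have hck0 : (0:ℝ) ≤ c / k0 ^ 2 := by positivity
  have hck0' : c / k0 ^ 2 < 1 := by rw [div_lt_one hk0p]; linarith
  have hck1 : (0:ℝ) ≤ c / k1 ^ 2 := by positivity
  have hck1' : c / k1 ^ 2 < 1 := by rw [div_lt_one hk1p]; linarith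
  set α : ℝ := myAtanh (c / k0 ^ 2) with hα_def
  set β : ℝ := myAtanh (2 * c) with hβ_def
  set δ : ℝ := myAtanh (c / k1 ^ 2) with hδ_def
  have hkey : c = 2 * β - α - δ := by linarith
  have hαβ : α < β := by
    apply myAtanh_strictMono hck0 _ h2c1
    rw [div_lt_iff₀ hk0p]
    nlinarith
  have hδα : δ ≤ α := by
    apply myAtanh_mono hck1 _ hck0'
    gcongr
  have hδ0 : 0 < δ := by
    have h6 : 0 < c / k1 ^ 2 := by positivity
    linarith [le_myAtanh hck1 hck1']
  have hα0 : 0 < α := by linarith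
  set ζ : ℝ := (β - α) / c with hζ_def
  have hζ0 : 0 < ζ := div_pos (by linarith) hcp
  have hζ1 : ζ < 1 := by
    rw [hζ_def, div_lt_one hcp]
    linarith
  have hcζ : c * ζ = β - α := by rw [hζ_def]; field_simp
  have hargL0 : c * 0 + α = α := by ring
  have hargLζ : c * ζ + α = β := by rw [hcζ]; ring
  have hargRζ : c + δ - c * ζ = β := by rw [hcζ]; linarith
  have hargR1 : c + δ - c * 1 = δ := by ring
  -- hyperbolic identities
  have hsinhα : Real.sinh α = c / k0 ^ 2 * Real.cosh α := sinh_myAtanh hck0 hck0'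
  have hsinhβ : Real.sinh β = 2 * c * Real.cosh β := sinh_myAtanh h2c h2c1
  have hsinhδ : Real.sinh δ = c / k1 ^ 2 * Real.cosh δ := sinh_myAtanh hck1 hck1'
  -- derivative helpers
  have huL : ∀ x : ℝ, HasDerivAt (fun x => c * x + α) c x := by
    intro x
    simpa using ((hasDerivAt_id x).const_mul c).add_const α
  have huR : ∀ x : ℝ, HasDerivAt (fun x => c + δ - c * x) (-c) x := by
    intro x
    simpa using ((hasDerivAt_id x).const_mul c).const_sub (c + δ)
  refine ⟨-(c ^ 2), by nlinarith, ζ, ⟨hζ0, hζ1⟩, ?_⟩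
  apply glue hζ0 hζ1
    (fun x => Real.sinh (c * x + α)) (fun x => Real.sinh (c + δ - c * x))
    (fun x => Real.cosh (c * x + α) * c) (fun x => Real.cosh (c + δ - c * x) * -c)
  · exact fun x _ => ((huL x).sinh).hasDerivWithinAt
  · exact fun x _ => ((huR x).sinh).hasDerivWithinAt
  · intro x hx
    apply Real.sinh_pos_iff.2
    have : 0 ≤ c * x := mul_nonneg hcp.le hx.1
    linarith
  · intro x hx
    apply Real.sinh_pos_iff.2
    have : c * x ≤ c * 1 := mul_le_mul_of_nonneg_left hx.2 hcp.le
    rw [mul_one] at this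
    linarith
  · exact ((Real.continuous_cosh.comp ((continuous_const.mul continuous_id).add
      continuous_const)).mul continuous_const).continuousOn
  · exact ((Real.continuous_cosh.comp (continuous_const.sub
      (continuous_const.mul continuous_id))).mul continuous_const).continuousOn
  · intro x _
    have h1 := ((huL x).cosh).mul_const c
    have h2 : Real.sinh (c * x + α) * c * c = -(-(c ^ 2) * Real.sinh (c * x + α)) := by ring
    rw [h2] at h1
    exact h1.hasDerivWithinAt
  · intro x _
    have h1 := ((huR x).cosh).mul_const (-c)
    have h2 : Real.sinh (c + δ - c * x) * -c * -c
        = -(-(c ^ 2) * Real.sinh (c + δ - c * x)) := by ring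
    rw [h2] at h1
    exact h1.hasDerivWithinAt
  · show Real.sinh (c * ζ + α) = Real.sinh (c + δ - c * ζ)
    rw [hargLζ, hargRζ]
  · show Real.cosh (c * 0 + α) * c - k0 ^ 2 * Real.sinh (c * 0 + α) = 0
    rw [hargL0, hsinhα, ← mul_assoc, mul_div_cancel₀ _ hk0p.ne']
    ring
  · show 2 * (Real.cosh (c * ζ + α) * c) - Real.sinh (c * ζ + α) = 0
    rw [hargLζ, hsinhβ]
    ring
  · show 2 * (Real.cosh (c + δ - c * ζ) * -c) + Real.sinh (c + δ - c * ζ) = 0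
    rw [hargRζ, hsinhβ]
    ring
  · show Real.cosh (c + δ - c * 1) * -c + k1 ^ 2 * Real.sinh (c + δ - c * 1) = 0
    rw [hargR1, hsinhδ, ← mul_assoc, mul_div_cancel₀ _ hk1p.ne']
    ring


theorem stmt18 (k0 k1 : ℝ) (hk0 : 0 ≤ k0) (hk01 : k0 ≤ k1) :
    (∃ μ : ℝ, -k0 ^ 4 ≤ μ ∧ ∃ ζ ∈ Ioo (0:ℝ) 1, BrokenSol k0 k1 μ ζ)
      ↔ (1 / 2 < k0 ^ 2 ∨ (k0 ^ 2 = 1 / 2 ∧ k1 ^ 2 = 1 / 2)) := by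
  constructor
  · rintro ⟨μ, hμ, ζ, hζ, hsol⟩
    exact necessity hμ hζ.1 hζ.2 hsol
  · rintro (hlt | ⟨h1, h2⟩)
    · have h01 : k0 ^ 2 ≤ k1 ^ 2 := by nlinarith
      have hk0p : (0:ℝ) < k0 ^ 2 := by linarith
      rcases lt_trichotomy (1 / k0 ^ 2 + 1 / k1 ^ 2) 3 with h | h | h
      · obtain ⟨μ, hμ0, ζ, hζ, hs⟩ := caseC hlt h01 h
        exact ⟨μ, le_trans (by nlinarith [sq_nonneg (k0 ^ 2)]) hμ0, ζ, hζ, hs⟩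
      · have hik0 : 1 / k0 ^ 2 < 2 := by rw [div_lt_iff₀ hk0p]; linarith
        have hik1 : 1 / k1 ^ 2 ≤ 1 / k0 ^ 2 := by
          apply div_le_div_of_nonneg_left (by norm_num) hk0p h01
        have hik0' : 1 < 1 / k0 ^ 2 := by linarith
        refine ⟨0, by nlinarith [sq_nonneg (k0 ^ 2)], 2 - 1 / k0 ^ 2,
          ⟨by linarith, by linarith⟩, caseB hlt h01 h⟩
      · exact caseD hlt h01 h
    · refine ⟨-(1 / 4), ?_, 1 / 2, by norm_num, caseA h1 h2⟩
      have h4 : k0 ^ 4 = 1 / 4 := by nlinarith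
      linarith
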